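/- Let n ≥ 2. For every permutation p of {1,…,n}, the entry p_n is a child of the entry p_{n−1} in the minmax tree T^m_p. -/

import Mathlib

/-- Binary trees with natural-number labels, used to model minmax trees of
permutations. -/
inductive BTree where
  | nil : BTree
  | node : ℕ → BTree → BTree → BTree
deriving DecidableEq, Repr

namespace BTree

/-- The label of the root (if any). -/
def rootVal : BTree → Option ℕ
  | .nil => none
  | .node v _ _ => some v

/-- Whether the value `x` occurs as a label in the tree. -/
def memB : BTree → ℕ → Bool
  | .nil, _ => false
  | .node v l r, x => (x == v) || memB l x || memB r x

/-- The number of children of the (unique, for permutations) node labelled `x`. -/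
def numChildren : BTree → ℕ → ℕ
  | .nil, _ => 0
  | .node v l r, x =>
      if x = v then (if l = .nil then 0 else 1) + (if r = .nil then 0 else 1)
      else numChildren l x + numChildren r x

/-- `x` is a leaf of the tree: it occurs in the tree and has no children. -/
def IsLeaf (t : BTree) (x : ℕ) : Prop := t.memB x = true ∧ t.numChildren x = 0

instance (t : BTree) (x : ℕ) : Decidable (t.IsLeaf x) := by unfold IsLeaf; infer_instance

/-- `childB t x y = true` iff `x` is a child of `y` in `t`, i.e. `x` is the root of
the left or the right subtree hanging from `y`. -/
def childB : BTree → ℕ → ℕ → Bool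
  | .nil, _, _ => false
  | .node v l r, x, y =>
      ((y == v) && (l.rootVal == some x || r.rootVal == some x))
      || childB l x y || childB r x y

/-- `ancB t x y = true` iff `x` is a (strict) ancestor of `y` in `t`, i.e. `y` lies
in a subtree hanging from `x`. -/
def ancB : BTree → ℕ → ℕ → Bool
  | .nil, _, _ => false
  | .node v l r, x, y =>
      ((x == v) && (memB l y || memB r y)) || ancB l x y || ancB r x y

end BTree

/-- `x` is the leftmost-eligible extreme letter of `l`: the minimum or the maximum. -/
def isExtreme (l : List ℕ) (x : ℕ) : Bool :=
  (l.min? == some x) || (l.max? == some x)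

/-- Fuelled construction of the minmax tree of a list of distinct naturals:
split the list as `u ++ [m] ++ v` where `m` is the leftmost of the minimum and
maximum letters, put `m` at the root and recurse on `u` (left) and `v` (right). -/
def mmAux : ℕ → List ℕ → BTree
  | 0, _ => .nil
  | fuel+1, l =>
    if l.isEmpty then .nil
    else
      let k := l.findIdx (isExtreme l)
      .node (l.getD k 0) (mmAux fuel (l.take k)) (mmAux fuel (l.drop (k+1)))

/-- The minmax tree `T^m_p` of a word `l` (with distinct letters). -/
def minmaxTree (l : List ℕ) : BTree := mmAux l.length l

/-- The word `p_1 p_2 … p_n` on the letters `{1,…,n}` associated to a permutation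
`p` of `Fin n`. -/
def permList (n : ℕ) (p : Equiv.Perm (Fin n)) : List ℕ :=
  List.ofFn (fun i => (p i : ℕ) + 1)

/-- The `i`-th entry `p_i` (1-indexed) of the permutation `p`. -/
def entryAt (n : ℕ) (p : Equiv.Perm (Fin n)) (i : ℕ) : ℕ :=
  (permList n p).getD (i - 1) 0

lemma mmAux_nil (f : ℕ) : mmAux f [] = .nil := by
  cases f <;> simp [mmAux]

lemma mmAux_singleton (f : ℕ) (hf : 1 ≤ f) (a : ℕ) : mmAux f [a] = .node a .nil .nil := by
  obtain ⟨f, rfl⟩ : ∃ g, f = g + 1 := ⟨f - 1, by omega⟩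
  have h0 : [a].findIdx (isExtreme [a]) = 0 := by
    simp [List.findIdx_cons, isExtreme]
  simp [mmAux, h0, mmAux_nil]

lemma findIdx_extreme_lt (l : List ℕ) (hnd : l.Nodup) (hl : 2 ≤ l.length) :
    l.findIdx (isExtreme l) + 2 ≤ l.length := by
  -- l is nonempty, so min? and max? are some
  obtain ⟨a, ha⟩ : ∃ a, l.min? = some a := by
    cases h : l.min? with
    | none => rw [List.min?_eq_none_iff] at h; simp [h] at hl
    | some a => exact ⟨a, rfl⟩
  obtain ⟨b, hb⟩ : ∃ b, l.max? = some b := by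
    cases h : l.max? with
    | none => rw [List.max?_eq_none_iff] at h; simp [h] at hl
    | some b => exact ⟨b, rfl⟩
  rw [List.min?_eq_some_iff'] at ha
  rw [List.max?_eq_some_iff'] at hb
  -- a ≠ b since l has two distinct members
  have hab : a ≠ b := by
    intro h
    subst h
    obtain ⟨x, lx, hx⟩ := List.exists_cons_of_ne_nil (l := l) (by rintro rfl; simp at hl)
    subst hx
    obtain ⟨y, ly, hy⟩ := List.exists_cons_of_ne_nil (l := lx) (by
      rintro rfl; simp at hl)
    subst hy
    have hxy : x ≠ y := by simp [List.nodup_cons] at hnd; tauto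
    have h1 : a ≤ x := ha.2 x (by simp)
    have h2 : x ≤ a := hb.2 x (by simp)
    have h3 : a ≤ y := ha.2 y (by simp)
    have h4 : y ≤ a := hb.2 y (by simp)
    omega
  set i := l.idxOf a with hi
  set j := l.idxOf b with hj
  have hil : i < l.length := List.idxOf_lt_length_iff.2 ha.1
  have hjl : j < l.length := List.idxOf_lt_length_iff.2 hb.1
  have hgi : l[i] = a := List.getElem_idxOf hil
  have hgj : l[j] = b := List.getElem_idxOf hjl
  have hij : i ≠ j := fun h => hab ((List.idxOf_inj ha.1).1 h)
  have hki : l.findIdx (isExtreme l) ≤ i := by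
    by_contra h
    push_neg at h
    have := List.not_of_lt_findIdx h
    rw [hgi] at this
    simp [isExtreme] at this
    rw [List.min?_eq_some_iff'] at this
    exact this.1 ha
  have hkj : l.findIdx (isExtreme l) ≤ j := by
    by_contra h
    push_neg at h
    have := List.not_of_lt_findIdx h
    rw [hgj] at this
    simp [isExtreme] at this
    rw [List.max?_eq_some_iff'] at this
    exact this.2 hb
  omega

lemma getD_drop_zero (l : List ℕ) (m j : ℕ) (h : m + j < l.length) :
    (l.drop m).getD j 0 = l.getD (m + j) 0 := by
  rw [List.getD_eq_getElem _ _ (by rw [List.length_drop]; omega),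
      List.getD_eq_getElem _ _ h, List.getElem_drop]

lemma mmAux_child (fuel : ℕ) : ∀ l : List ℕ, l.Nodup → 2 ≤ l.length → l.length ≤ fuel →
    (mmAux fuel l).childB (l.getD (l.length - 1) 0) (l.getD (l.length - 2) 0) = true := by
  induction fuel with
  | zero => intro l _ h2 hf; omega
  | succ f ih =>
    intro l hnd h2 hf
    have hne : ¬ l.isEmpty := by
      cases l <;> simp_all
    rw [mmAux]
    simp only [hne, if_neg, Bool.false_eq_true, not_false_eq_true]
    set k := l.findIdx (isExtreme l) with hk
    have hklt : k + 2 ≤ l.length := findIdx_extreme_lt l hnd h2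
    by_cases hcase : k + 2 = l.length
    · -- penultimate is the root, last is the singleton right subtree
      have hdl : (l.drop (k + 1)).length = 1 := by simp; omega
      obtain ⟨a, hda⟩ := List.length_eq_one_iff.1 hdl
      have hav : a = l.getD (l.length - 1) 0 := by
        have h1 : (l.drop (k+1)).getD 0 0 = a := by rw [hda]; rfl
        rw [← h1, getD_drop_zero l (k+1) 0 (by omega)]
        congr 1
        omega
      rw [hda, mmAux_singleton f (by omega) a]
      have hroot : l.getD k 0 = l.getD (l.length - 2) 0 := by congr 1; omega
      rw [hroot, hav]
      simp [BTree.childB, BTree.rootVal]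
    · -- both last entries are in the right subtree; recurse
      have hd2 : 2 ≤ (l.drop (k + 1)).length := by simp; omega
      have hrec := ih (l.drop (k + 1)) (hnd.sublist (List.drop_sublist _ _)) hd2
        (by simp; omega)
      have hlast : (l.drop (k+1)).getD ((l.drop (k+1)).length - 1) 0 = l.getD (l.length - 1) 0 := by
        have hj : (l.drop (k+1)).length - 1 = l.length - k - 2 := by simp; omega
        rw [hj, getD_drop_zero l (k+1) _ (by omega)]
        congr 1
        omega
      have hpen : (l.drop (k+1)).getD ((l.drop (k+1)).length - 2) 0 = l.getD (l.length - 2) 0 := by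
        have hj : (l.drop (k+1)).length - 2 = l.length - k - 3 := by simp; omega
        rw [hj, getD_drop_zero l (k+1) _ (by omega)]
        congr 1
        omega
      rw [hlast, hpen] at hrec
      simp only [BTree.childB, Bool.or_eq_true]
      right
      exact hrec

/-- For `n ≥ 2`, in every permutation `p` of `{1,…,n}` the entry
`p_n` is a child of the entry `p_{n-1}` in the minmax tree. -/
theorem last_entry_child_of_penultimate (n : ℕ) (hn : 2 ≤ n) (p : Equiv.Perm (Fin n)) :
    (minmaxTree (permList n p)).childB (entryAt n p n) (entryAt n p (n - 1)) = true := by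
  have hlen : (permList n p).length = n := by simp [permList]
  have hnd : (permList n p).Nodup := by
    rw [permList, List.nodup_ofFn]
    intro i j h
    simp only [add_left_inj, Nat.cast_injective] at h
    exact p.injective (Fin.ext (by omega))
  have := mmAux_child (permList n p).length (permList n p) hnd (by omega) le_rfl
  rw [minmaxTree, entryAt, entryAt, hlen] at *
  convert this using 3
  omega
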